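/- Let K, K₀ ∈ 𝒦^{n*} and let r = d_H(K,K₀) be their Hausdorff distance. Then θ^l(K) ≤ (1+r)^{2n}·θ^l(K₀). -/

import Mathlib

open Metric Set Pointwise MeasureTheory Filter ENNReal

/-- The lattice covering density `θ^l(K)`:
`inf {vol(K)/det Λ : Λ a lattice in ℝⁿ with ⋃_{λ ∈ Λ} (K + λ) = ℝⁿ}`, where a lattice is the
set of integer linear combinations of a basis of `ℝⁿ`, and its covolume `det Λ` is the volume
of a fundamental parallelepiped. -/
noncomputable def thetaL (n : ℕ) (K : Set (EuclideanSpace ℝ (Fin n))) : ℝ≥0∞ :=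
  ⨅ (b : Module.Basis (Fin n) ℝ (EuclideanSpace ℝ (Fin n)))
    (_ : ⋃ v ∈ (Submodule.span ℤ (Set.range ⇑b) : Submodule ℤ (EuclideanSpace ℝ (Fin n))).carrier,
        v +ᵥ K = Set.univ),
    volume K / volume (ZSpan.fundamentalDomain b)

lemma subset_one_add_smul (n : ℕ) (A B : Set (EuclideanSpace ℝ (Fin n)))
    (hAcomp : IsCompact A) (hBcomp : IsCompact B) (hBconv : Convex ℝ B)
    (hBl : closedBall (0 : EuclideanSpace ℝ (Fin n)) 1 ⊆ B)
    (r : ℝ) (hr : hausdorffDist A B ≤ r) : A ⊆ (1 + r) • B := by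
  have hBne : B.Nonempty := ⟨0, hBl (by simp)⟩
  have hr0 : 0 ≤ r := le_trans hausdorffDist_nonneg hr
  intro x hx
  have hAne : A.Nonempty := ⟨x, hx⟩
  have hne : EMetric.hausdorffEdist A B ≠ ⊤ :=
    Metric.hausdorffEdist_ne_top_of_nonempty_of_bounded hAne hBne hAcomp.isBounded hBcomp.isBounded
  have h1 : infDist x B ≤ r := le_trans (infDist_le_hausdorffDist_of_mem hx hne) hr
  obtain ⟨y, hy, hxy⟩ := hBcomp.exists_infDist_eq_dist hBne x
  rw [hxy] at h1
  rcases eq_or_lt_of_le hr0 with h0 | hrpos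
  · have : x = y := dist_le_zero.mp (h0 ▸ h1)
    rw [← h0, add_zero, one_smul]
    exact this ▸ hy
  · have hsub : x - y ∈ r • B := by
      have hmem : x - y ∈ closedBall (0 : EuclideanSpace ℝ (Fin n)) r := by
        simpa [dist_eq_norm] using h1
      have hball : closedBall (0 : EuclideanSpace ℝ (Fin n)) r = r • closedBall 0 1 := by
        rw [smul_closedBall' (ne_of_gt hrpos), smul_zero, Real.norm_eq_abs,
          abs_of_pos hrpos, mul_one]
      rw [hball] at hmem
      exact Set.smul_set_mono hBl hmem
    rw [hBconv.add_smul (by norm_num : (0:ℝ) ≤ 1) hr0, one_smul]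
    exact ⟨y, hy, x - y, hsub, by module⟩

lemma smul_mem_span_unitsSMul (n : ℕ) (b : Module.Basis (Fin n) ℝ (EuclideanSpace ℝ (Fin n)))
    (c : ℝ) (hc : c ≠ 0) (v : EuclideanSpace ℝ (Fin n))
    (hv : v ∈ Submodule.span ℤ (Set.range ⇑b)) :
    c • v ∈ Submodule.span ℤ (Set.range ⇑(b.unitsSMul fun _ => Units.mk0 c hc)) := by
  induction hv using Submodule.span_induction with
  | mem x hx =>
    obtain ⟨i, rfl⟩ := hx
    exact Submodule.subset_span ⟨i, by rw [Module.Basis.unitsSMul_apply]; rfl⟩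
  | zero => simp
  | add x y _ _ hx hy => rw [smul_add]; exact add_mem hx hy
  | smul m x _ hx => rw [smul_comm]; exact Submodule.smul_mem _ m hx

lemma fd_unitsSMul (n : ℕ) (b : Module.Basis (Fin n) ℝ (EuclideanSpace ℝ (Fin n))) (c : ℝ) (hc : 0 < c) :
    ZSpan.fundamentalDomain (b.unitsSMul (fun _ => Units.mk0 c hc.ne')) =
      c • ZSpan.fundamentalDomain b := by
  ext x
  rw [Set.mem_smul_set_iff_inv_smul_mem₀ hc.ne', ZSpan.mem_fundamentalDomain,
    ZSpan.mem_fundamentalDomain]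
  apply forall_congr'
  intro i
  simp only [Module.Basis.repr_unitsSMul, _root_.map_smul, Finsupp.smul_apply, Units.smul_def,
    Units.val_inv_eq_inv_val, Units.val_mk0]

/-- Let `K, K₀ ∈ 𝒦^{n*}` and let `r = d_H(K, K₀)` be their Hausdorff distance.
Then `θ^l(K) ≤ (1+r)^{2n} · θ^l(K₀)`. -/
theorem stmt_4 (n : ℕ) (hn : 1 ≤ n) (K K₀ : Set (EuclideanSpace ℝ (Fin n)))
    (hKcomp : IsCompact K) (hKconv : Convex ℝ K) (hKint : (interior K).Nonempty)
    (hK₀comp : IsCompact K₀) (hK₀conv : Convex ℝ K₀) (hK₀int : (interior K₀).Nonempty)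
    (hKl : closedBall (0 : EuclideanSpace ℝ (Fin n)) 1 ⊆ K) (hKu : K ⊆ closedBall 0 n)
    (hK₀l : closedBall (0 : EuclideanSpace ℝ (Fin n)) 1 ⊆ K₀) (hK₀u : K₀ ⊆ closedBall 0 n)
    (r : ℝ) (hr : r = hausdorffDist K K₀) :
    thetaL n K ≤ ENNReal.ofReal ((1 + r) ^ (2 * n)) * thetaL n K₀ := by
  have hr0 : 0 ≤ r := hr ▸ hausdorffDist_nonneg
  have h1r : (0:ℝ) < 1 + r := by linarith
  set c : ℝ := (1 + r)⁻¹ with hc_def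
  have hc : 0 < c := inv_pos.mpr h1r
  -- inclusions
  have hKK₀ : K ⊆ (1 + r) • K₀ :=
    subset_one_add_smul n K K₀ hKcomp hK₀comp hK₀conv hK₀l r (le_of_eq hr.symm)
  have hK₀K : K₀ ⊆ (1 + r) • K :=
    subset_one_add_smul n K₀ K hK₀comp hKcomp hKconv hKl r
      (le_of_eq (hr.trans hausdorffDist_comm).symm)
  -- constants
  set s : ℝ≥0∞ := ENNReal.ofReal ((1 + r) ^ n) with hs_def
  have hs0 : s ≠ 0 := (ENNReal.ofReal_pos.mpr (pow_pos h1r n)).ne'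
  have hst : s ≠ ⊤ := ENNReal.ofReal_ne_top
  have hC0 : (ENNReal.ofReal ((1 + r) ^ (2 * n))) ≠ 0 :=
    (ENNReal.ofReal_pos.mpr (pow_pos h1r _)).ne'
  have hCt : (ENNReal.ofReal ((1 + r) ^ (2 * n))) ≠ ⊤ := ENNReal.ofReal_ne_top
  -- volume bound
  have hvol : volume K ≤ s * volume K₀ := by
    calc volume K ≤ volume ((1 + r) • K₀) := measure_mono hKK₀
      _ = s * volume K₀ := by
          rw [Measure.addHaar_smul_of_nonneg volume h1r.le, finrank_euclideanSpace_fin]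
  -- rewrite RHS
  simp only [thetaL]
  rw [mul_iInf' (fun h => absurd h hCt) (fun h => absurd h hC0)]
  refine le_iInf fun b => ?_
  rw [mul_iInf' (fun h => absurd h hCt) (fun h => absurd h hC0)]
  refine le_iInf fun hcov => ?_
  -- the scaled basis
  set b' := b.unitsSMul (fun _ => Units.mk0 c hc.ne') with hb'_def
  have hcov' : ⋃ v ∈ (Submodule.span ℤ (Set.range ⇑b') :
      Submodule ℤ (EuclideanSpace ℝ (Fin n))).carrier, v +ᵥ K = Set.univ := by
    rw [Set.eq_univ_iff_forall]
    intro x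
    have hx : (1 + r) • x ∈ ⋃ v ∈ (Submodule.span ℤ (Set.range ⇑b) :
        Submodule ℤ (EuclideanSpace ℝ (Fin n))).carrier, v +ᵥ K₀ := by
      rw [hcov]; trivial
    rw [Set.mem_iUnion₂] at hx
    obtain ⟨v, hv, hmem⟩ := hx
    rw [Set.mem_vadd_set_iff_neg_vadd_mem, vadd_eq_add] at hmem
    obtain ⟨z, hz, hzeq0⟩ := hK₀K hmem
    have hzeq : (1 + r) • z = -v + (1 + r) • x := hzeq0
    rw [Set.mem_iUnion₂]
    refine ⟨c • v, smul_mem_span_unitsSMul n b c hc.ne' v hv, ?_⟩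
    rw [Set.mem_vadd_set_iff_neg_vadd_mem, vadd_eq_add]
    have hxz : -(c • v) + x = z := by
      have : c • ((1 + r) • z) = z := by
        rw [smul_smul, inv_mul_cancel₀ h1r.ne', one_smul]
      rw [← this, hzeq, smul_add, smul_smul, inv_mul_cancel₀ h1r.ne', one_smul, smul_neg]
    rw [hxz]; exact hz
  refine le_trans (iInf₂_le b' hcov') ?_
  -- volume of fundamental domain
  set V := volume (ZSpan.fundamentalDomain b) with hV_def
  have hFD : volume (ZSpan.fundamentalDomain b') = s⁻¹ * V := by
    rw [hb'_def, fd_unitsSMul n b c hc, Measure.addHaar_smul_of_nonneg volume hc.le,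
      finrank_euclideanSpace_fin, hs_def, hc_def, inv_pow,
      ENNReal.ofReal_inv_of_pos (pow_pos h1r n)]
  rw [hFD]
  have hsinv0 : s⁻¹ ≠ 0 := ENNReal.inv_ne_zero.mpr hst
  have hsinvt : s⁻¹ ≠ ⊤ := ENNReal.inv_ne_top.mpr hs0
  calc volume K / (s⁻¹ * V) = volume K * ((s⁻¹)⁻¹ * V⁻¹) := by
        rw [div_eq_mul_inv, ENNReal.mul_inv (Or.inl hsinv0) (Or.inl hsinvt)]
    _ = s * (volume K * V⁻¹) := by rw [inv_inv]; ring
    _ ≤ s * (s * volume K₀ * V⁻¹) := by gcongr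
    _ = (s * s) * (volume K₀ / V) := by rw [div_eq_mul_inv]; ring
    _ = ENNReal.ofReal ((1 + r) ^ (2 * n)) * (volume K₀ / V) := by
        rw [hs_def, ← ENNReal.ofReal_mul (by positivity), ← pow_add, two_mul]
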